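/- The Coxeter group of type E₈ admits a presentation with three generators σ₁, σ, ω and relations: σ₁σⁱσ₁σ⁻ⁱ = σⁱσ₁σ⁻ⁱσ₁ for i = 2, 3, 4; σ⁸ = (σσ₁)⁷; ωσⁱσ₁σ⁻ⁱ = σⁱσ₁σ⁻ⁱω for i = 0, 1, 3, 4, 5, 6; ωσ²σ₁σ⁻²ω = σ²σ₁σ⁻²ωσ²σ₁σ⁻²; σ₁² = 1; ω² = 1. -/

import Mathlib

namespace CoxeterE8

open FreeGroup in
/-- Relators of the standard Coxeter presentation of type `E₈`: `Sum.inl i` is `s_{i+1}`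
(`i : Fin 7`, the chain), `Sum.inr ()` is `t`, attached to the third node `s₃`.
All generators are involutions. -/
inductive IsCoxE8Rel : FreeGroup (Fin 7 ⊕ Unit) → Prop
  | sq (i : Fin 7) : IsCoxE8Rel ((of (.inl i)) ^ 2)
  | t_sq : IsCoxE8Rel ((of (.inr ()) : FreeGroup (Fin 7 ⊕ Unit)) ^ 2)
  | comm_ss (i j : Fin 7) (h : (i : ℕ) + 1 < j) :
      IsCoxE8Rel ((of (.inl i) * of (.inl j)) ^ 2)
  | braid_s (i : ℕ) (h : i + 1 < 7) :
      IsCoxE8Rel ((of (.inl ⟨i, by omega⟩) * of (.inl ⟨i + 1, h⟩)) ^ 3)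
  | comm_t (i : Fin 7) (h : (i : ℕ) ≠ 2) :
      IsCoxE8Rel ((of (.inr ()) * of (.inl i)) ^ 2)
  | braid_t : IsCoxE8Rel ((of (.inr ()) * of (.inl 2)) ^ 3)

open FreeGroup in
/-- Relators of the three-generator presentation of the Coxeter group of type `E₈`:
generator `0` is `σ₁`, generator `1` is `σ`, generator `2` is `ω`. -/
inductive IsCoxE8ThreeRel : FreeGroup (Fin 3) → Prop
  | r₁ (i : ℕ) (h : i = 2 ∨ i = 3 ∨ i = 4) :
      IsCoxE8ThreeRel (of 0 * of 1 ^ i * of 0 * (of 1 ^ i)⁻¹ *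
        (of 1 ^ i * of 0 * (of 1 ^ i)⁻¹ * of 0)⁻¹)
  | r₂ : IsCoxE8ThreeRel (of 1 ^ 8 * ((of 1 * of 0) ^ 7)⁻¹)
  | r₃ (i : ℕ) (h : i = 0 ∨ i = 1 ∨ i = 3 ∨ i = 4 ∨ i = 5 ∨ i = 6) :
      IsCoxE8ThreeRel (of 2 * (of 1 ^ i * of 0 * (of 1 ^ i)⁻¹) *
        (of 1 ^ i * of 0 * (of 1 ^ i)⁻¹ * of 2)⁻¹)
  | r₄ : IsCoxE8ThreeRel (of 2 * (of 1 ^ 2 * of 0 * (of 1 ^ 2)⁻¹) * of 2 *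
      (of 1 ^ 2 * of 0 * (of 1 ^ 2)⁻¹ * of 2 * (of 1 ^ 2 * of 0 * (of 1 ^ 2)⁻¹))⁻¹)
  | r₅ : IsCoxE8ThreeRel ((of 0 : FreeGroup (Fin 3)) ^ 2)
  | r₆ : IsCoxE8ThreeRel ((of 2 : FreeGroup (Fin 3)) ^ 2)


section Chain
variable {G : Type*} [Group G]

/-- `cp a k = a 0 * a 1 * ⋯ * a k`. -/
def cp (a : ℕ → G) (k : ℕ) : G := ((List.range (k+1)).map a).prod

/-- `suf a j k = a j * a (j+1) * ⋯ * a k` (empty if `j > k`). -/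
def suf (a : ℕ → G) (j k : ℕ) : G := ((List.range' j (k+1-j)).map a).prod

variable (a : ℕ → G)

lemma cp_zero : cp a 0 = a 0 := by simp [cp, List.range_succ]

lemma cp_succ (k : ℕ) : cp a (k+1) = cp a k * a (k+1) := by
  simp [cp, List.range_succ, mul_assoc]

lemma suf_self (k : ℕ) : suf a k k = a k := by
  simp [suf]

lemma suf_empty (k : ℕ) : suf a (k+1) k = 1 := by
  have h : k + 1 - (k+1) = 0 := by omega
  simp [suf, h]

lemma suf_cons (j k : ℕ) (h : j ≤ k) : suf a j k = a j * suf a (j+1) k := by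
  have h1 : k + 1 - j = (k - j) + 1 := by omega
  have h2 : k + 1 - (j+1) = k - j := by omega
  rw [suf, suf, h1, h2, List.range'_succ]
  simp

lemma suf_zero (k : ℕ) : suf a 0 k = cp a k := by
  simp [suf, cp, List.range_eq_range']

variable (hsq : ∀ i, i < 7 → a i * a i = 1)
  (hcomm : ∀ i j, i + 2 ≤ j → j < 7 → a i * a j = a j * a i)
  (hbraid : ∀ i, i + 1 < 7 → a i * a (i+1) * a i = a (i+1) * a i * a (i+1))

include hcomm in
lemma a_cp_comm : ∀ m k, m + 2 ≤ k → k < 7 → a k * cp a m = cp a m * a k := by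
  intro m
  induction m with
  | zero => intro k h1 h2; rw [cp_zero]; exact (hcomm 0 k h1 h2).symm
  | succ m ih =>
    intro k h1 h2
    rw [cp_succ, ← mul_assoc, ih k (by omega) h2, mul_assoc,
      ← hcomm (m+1) k (by omega) h2, mul_assoc]

include hcomm hbraid in
lemma cp_conj : ∀ k, k < 7 → ∀ j, j < k → cp a k * a j = a (j+1) * cp a k := by
  intro k
  induction k with
  | zero => omega
  | succ k ih =>
    intro hk7 j hj
    rcases Nat.lt_or_ge j k with hjk | hjk
    · rw [cp_succ, mul_assoc, ← hcomm j (k+1) (by omega) hk7, ← mul_assoc,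
        ih (by omega) j hjk, mul_assoc]
    · have hjeq : j = k := by omega
      subst hjeq
      cases j with
      | zero =>
        rw [cp_succ, cp_zero, hbraid 0 (by omega)]; group
      | succ m =>
        calc cp a (m+1+1) * a (m+1)
            = cp a m * (a (m+1) * a (m+2) * a (m+1)) := by rw [cp_succ, cp_succ]; group
          _ = cp a m * (a (m+2) * a (m+1) * a (m+2)) := by rw [hbraid (m+1) (by omega)]
          _ = (a (m+2) * cp a m) * (a (m+1) * a (m+2)) := by
              rw [a_cp_comm a hcomm m (m+2) (by omega) (by omega)]; group
          _ = a (m+2) * cp a (m+1+1) := by rw [cp_succ, cp_succ]; group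


include hsq hcomm hbraid in
lemma cp_suf : ∀ n k j, 1 ≤ k → k < 7 → j ≤ k → k - j = n →
    cp a k * suf a j k = suf a (j+1) k * cp a (k-1) := by
  intro n
  induction n with
  | zero =>
    intro k j hk1 hk7 hjk hn
    have hje : j = k := by omega
    subst hje
    obtain ⟨m, rfl⟩ : ∃ m, j = m + 1 := ⟨j - 1, by omega⟩
    rw [suf_self, suf_empty, cp_succ, mul_assoc, hsq (m+1) (by omega), mul_one,
      one_mul]
    simp
  | succ n ih =>
    intro k j hk1 hk7 hjk hn
    have hjk' : j < k := by omega
    rw [suf_cons a j k (by omega), ← mul_assoc, cp_conj a hcomm hbraid k hk7 j hjk',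
      mul_assoc, ih k (j+1) hk1 hk7 (by omega) (by omega), ← mul_assoc,
      ← suf_cons a (j+1) k (by omega)]

include hsq hcomm hbraid in
lemma cp_pow_suf : ∀ k, 1 ≤ k → k < 7 → ∀ m, m ≤ k+1 →
    (cp a k)^m * suf a (k+1-m) k = (cp a (k-1))^m := by
  intro k hk1 hk7 m
  induction m with
  | zero => intro _; simpa using suf_empty a k
  | succ m ih =>
    intro hm
    have h1 : k + 1 - (m+1) ≤ k := by omega
    have h2 : k + 1 - (m+1) + 1 = k + 1 - m := by omega
    rw [pow_succ, mul_assoc, cp_suf a hsq hcomm hbraid (k - (k+1-(m+1))) k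
      (k+1-(m+1)) hk1 hk7 h1 rfl, h2, ← mul_assoc, ih (by omega), pow_succ]

include hsq hcomm hbraid in
lemma cp_pow_eq : ∀ k, 1 ≤ k → k < 7 → (cp a k)^(k+2) = (cp a (k-1))^(k+1) := by
  intro k hk1 hk7
  have := cp_pow_suf a hsq hcomm hbraid k hk1 hk7 (k+1) (by omega)
  rw [show k + 1 - (k+1) = 0 by omega, suf_zero] at this
  rw [← this, pow_succ]

include hsq hcomm hbraid in
lemma cp_pow_one : ∀ k, k < 7 → (cp a k)^(k+2) = 1 := by
  intro k
  induction k with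
  | zero => intro _; rw [cp_zero, pow_two]; exact hsq 0 (by omega)
  | succ k ih =>
    intro hk7
    rw [show k + 1 + 2 = (k+1) + 2 from rfl,
      cp_pow_eq a hsq hcomm hbraid (k+1) (by omega) hk7]
    simpa using ih (by omega)

include hcomm hbraid in
lemma cp_conj_pow : ∀ i, i ≤ 6 → (cp a 6)^i * a 0 * ((cp a 6)^i)⁻¹ = a i := by
  intro i
  induction i with
  | zero => intro _; simp
  | succ i ih =>
    intro hi
    have h1 : cp a 6 * a i * (cp a 6)⁻¹ = a (i+1) := by
      rw [cp_conj a hcomm hbraid 6 (by omega) i (by omega), mul_assoc, mul_inv_cancel,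
        mul_one]
    rw [← h1, ← ih (by omega)]
    group

include hsq hcomm hbraid in
lemma cp_mul_a_pow : ∀ n j, j ≤ 6 → 6 - j = n → (cp a 6 * a j)^7 = 1 := by
  intro n
  induction n with
  | zero =>
    intro j hj hn
    have : j = 6 := by omega
    subst this
    have h6 : cp a 6 * a 6 = cp a 5 := by
      rw [show (6:ℕ) = 5 + 1 from rfl, cp_succ, mul_assoc, hsq 6 (by omega), mul_one]
    rw [h6]
    exact cp_pow_one a hsq hcomm hbraid 5 (by omega)
  | succ n ih =>
    intro j hj hn
    have hj6 : j < 6 := by omega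
    have h1 : cp a 6 * (cp a 6 * a j) * (cp a 6)⁻¹ = cp a 6 * a (j+1) := by
      rw [mul_assoc (cp a 6), cp_conj a hcomm hbraid 6 (by omega) j hj6]
      group
    have h2 : (cp a 6 * a j) = (cp a 6)⁻¹ * (cp a 6 * a (j+1)) * ((cp a 6)⁻¹)⁻¹ := by
      rw [← h1]; group
    rw [h2, conj_pow, ih (j+1) (by omega) (by omega)]
    group

end Chain

section Helpers
variable {G : Type*} [Group G]

lemma comm_of_sq {x y : G} (hx : x * x = 1) (hy : y * y = 1)
    (hxy : (x * y) * (x * y) = 1) : x * y = y * x := by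
  have h1 : (x * y)⁻¹ = x * y := inv_eq_of_mul_eq_one_left hxy
  have h2 : x⁻¹ = x := inv_eq_of_mul_eq_one_left hx
  have h3 : y⁻¹ = y := inv_eq_of_mul_eq_one_left hy
  calc x * y = (x * y)⁻¹ := h1.symm
    _ = y⁻¹ * x⁻¹ := by group
    _ = y * x := by rw [h2, h3]

lemma braid_of_cube {x y : G} (hx : x * x = 1) (hy : y * y = 1)
    (h3 : (x * y)^3 = 1) : x * y * x = y * x * y := by
  have h1 : (x * y * x) * (y * x * y) = 1 := by
    rw [← h3]; simp only [pow_succ, pow_zero, one_mul]; group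
  have hyx : (y * x * y)⁻¹ = y * x * y := by
    rw [show (y * x * y)⁻¹ = y⁻¹ * x⁻¹ * y⁻¹ by group,
      inv_eq_of_mul_eq_one_left hx, inv_eq_of_mul_eq_one_left hy]
  calc x * y * x = (y * x * y)⁻¹ := by
        rw [eq_inv_iff_mul_eq_one]; exact h1
    _ = y * x * y := hyx

lemma sq_one_of_comm {x y : G} (hx : x * x = 1) (hy : y * y = 1)
    (hxy : x * y = y * x) : (x * y)^2 = 1 := by
  calc (x*y)^2 = x * (y * x) * y := by simp only [pow_succ, pow_zero, one_mul]; group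
    _ = x * (x * y) * y := by rw [hxy]
    _ = (x * x) * (y * y) := by group
    _ = 1 := by rw [hx, hy, one_mul]

lemma cube_one_of_braid {x y : G} (hx : x * x = 1) (hy : y * y = 1)
    (hb : x * y * x = y * x * y) : (x * y)^3 = 1 := by
  have : (x*y)^3 = (x * y * x) * (y * x * y) := by
    simp only [pow_succ, pow_zero, one_mul]; group
  rw [this, hb, show (y*x*y) * (y*x*y) = y * x * (y * y) * x * y by group, hy,
    show y * x * 1 * x * y = y * (x * x) * y by group, hx,
    show y * 1 * y = y * y by group, hy]
end Helpers

section Three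
variable {H : Type*} [Group H]

/-- `uu A B n = B^n * A * B^(-n)`. -/
def uu (A B : H) (n : ℤ) : H := B^n * A * B^(-n)

variable (A B C : H)

lemma uu_zero : uu A B 0 = A := by simp [uu]

lemma uu_natCast (i : ℕ) : uu A B (i : ℤ) = B^i * A * (B^i)⁻¹ := by
  simp [uu, zpow_natCast, zpow_neg]

lemma uu_shift (n m : ℤ) : uu A B (n + m) = B^n * uu A B m * B^(-n) := by
  unfold uu; group

variable (hA : A * A = 1) (hC : C * C = 1)
  (h1 : ∀ i : ℕ, i = 2 ∨ i = 3 ∨ i = 4 →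
    A * (B^i * A * (B^i)⁻¹) = (B^i * A * (B^i)⁻¹) * A)
  (h2 : B^(8:ℕ) = (B*A)^(7:ℕ))
  (h3 : ∀ i : ℕ, i = 0 ∨ i = 1 ∨ i = 3 ∨ i = 4 ∨ i = 5 ∨ i = 6 →
    C * (B^i * A * (B^i)⁻¹) = (B^i * A * (B^i)⁻¹) * C)
  (h4 : C * (B^(2:ℕ) * A * (B^(2:ℕ))⁻¹) * C = (B^(2:ℕ)*A*(B^(2:ℕ))⁻¹) * C * (B^(2:ℕ)*A*(B^(2:ℕ))⁻¹))

include hA in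
lemma uu_sq (n : ℤ) : uu A B n * uu A B n = 1 := by
  have h : uu A B n * uu A B n = B^n * (A * A) * B^(-n) := by unfold uu; group
  rw [h, hA, mul_one]; group

include h1 in
lemma uu_comm_small (n : ℤ) (d : ℕ) (hd : d = 2 ∨ d = 3 ∨ d = 4) :
    uu A B n * uu A B (n + d) = uu A B (n + d) * uu A B n := by
  have e1 : uu A B n * uu A B (n + d) = B^n * (A * uu A B d) * B^(-n) := by
    rw [uu_shift]; unfold uu; group
  have e2 : uu A B (n + d) * uu A B n = B^n * (uu A B d * A) * B^(-n) := by
    rw [uu_shift]; unfold uu; group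
  rw [e1, e2, uu_natCast, h1 d hd]

include hA h2 in
lemma uu_period (n : ℤ) : uu A B (n + 8) = uu A B n := by
  have hA' : A⁻¹ = A := inv_eq_of_mul_eq_one_left hA
  have key : A * B^(8:ℕ) * A = B^(8:ℕ) := by
    rw [h2, show A * (B*A)^7 * A = (A*B)^7 * (A*A) by
      simp only [pow_succ, pow_zero, one_mul]; group, hA, mul_one,
      show (A*B)^7 = B⁻¹ * ((B*A)^7) * B by
      simp only [pow_succ, pow_zero, one_mul]; group, ← h2]
    group
  have hcomm8 : A * B^(8:ℕ) = B^(8:ℕ) * A := by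
    calc A * B^(8:ℕ) = (A * B^(8:ℕ) * A) * A⁻¹ := by group
      _ = B^(8:ℕ) * A := by rw [key, hA']
  have hu8 : uu A B 8 = A := by
    rw [show (8:ℤ) = ((8:ℕ):ℤ) by norm_num, uu_natCast, ← hcomm8]
    group
  rw [show n + 8 = n + (8:ℤ) from rfl, uu_shift, hu8]
  unfold uu; group

include hA h1 h2 in
lemma uu_comm (n d : ℤ) (hd2 : 2 ≤ d) (hd6 : d ≤ 6) :
    uu A B n * uu A B (n + d) = uu A B (n + d) * uu A B n := by
  interval_cases d
  · exact_mod_cast uu_comm_small A B h1 n 2 (by norm_num)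
  · exact_mod_cast uu_comm_small A B h1 n 3 (by norm_num)
  · exact_mod_cast uu_comm_small A B h1 n 4 (by norm_num)
  · -- d = 5 : use period, n + 5 = (n - 3) + 8
    have hp : uu A B (n + 5) = uu A B (n - 3) := by
      rw [show n + 5 = (n - 3) + 8 by ring, uu_period A B hA h2]
    have := uu_comm_small A B h1 (n - 3) 3 (by norm_num)
    rw [show (n - 3) + ((3:ℕ):ℤ) = n by push_cast; ring] at this
    rw [hp, ← this]
  · -- d = 6
    have hp : uu A B (n + 6) = uu A B (n - 2) := by
      rw [show n + 6 = (n - 2) + 8 by ring, uu_period A B hA h2]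
    have := uu_comm_small A B h1 (n - 2) 2 (by norm_num)
    rw [show (n - 2) + ((2:ℕ):ℤ) = n by push_cast; ring] at this
    rw [hp, ← this]

include h2 in
lemma uu_sigma_prod :
    B = uu A B 0 * uu A B 1 * (uu A B 2 * (uu A B 3 * (uu A B 4 * (uu A B 5 * uu A B 6)))) := by
  have ex : (B*A)^(7:ℕ) = uu A B 1 * uu A B 2 * uu A B 3 * uu A B 4 * uu A B 5 * uu A B 6
      * uu A B 7 * B^(7:ℕ) := by
    unfold uu; simp only [pow_succ, pow_zero, one_mul]; group
  have hX : B * B^(7:ℕ) = (uu A B 1 * uu A B 2 * uu A B 3 * uu A B 4 * uu A B 5 * uu A B 6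
      * uu A B 7) * B^(7:ℕ) := by
    rw [show B * B^(7:ℕ) = B^(8:ℕ) by group, h2, ex]
  have hB : B = uu A B 1 * uu A B 2 * uu A B 3 * uu A B 4 * uu A B 5 * uu A B 6 * uu A B 7 :=
    mul_right_cancel hX
  calc B = B⁻¹ * B * B := by group
    _ = B⁻¹ * (uu A B 1 * uu A B 2 * uu A B 3 * uu A B 4 * uu A B 5 * uu A B 6 * uu A B 7) * B := by
        rw [← hB]
    _ = uu A B 0 * uu A B 1 * (uu A B 2 * (uu A B 3 * (uu A B 4 * (uu A B 5 * uu A B 6)))) := by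
        unfold uu; group

include hA h1 h2 in
lemma uu_braid01 : uu A B 0 * uu A B 1 * uu A B 0 = uu A B 1 * uu A B 0 * uu A B 1 := by
  have c0 : ∀ d : ℤ, 2 ≤ d → d ≤ 6 → uu A B d * uu A B 0 = uu A B 0 * uu A B d := by
    intro d hd2 hd6
    have := uu_comm A B hA h1 h2 0 d hd2 hd6
    rw [zero_add] at this
    exact this.symm
  have hw : (uu A B 2 * (uu A B 3 * (uu A B 4 * (uu A B 5 * uu A B 6)))) * uu A B 0
      = uu A B 0 * (uu A B 2 * (uu A B 3 * (uu A B 4 * (uu A B 5 * uu A B 6)))) := by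
    calc uu A B 2 * (uu A B 3 * (uu A B 4 * (uu A B 5 * uu A B 6))) * uu A B 0
        = uu A B 2 * (uu A B 3 * (uu A B 4 * (uu A B 5 * (uu A B 6 * uu A B 0)))) := by group
      _ = uu A B 2 * (uu A B 3 * (uu A B 4 * (uu A B 5 * (uu A B 0 * uu A B 6)))) := by
          rw [c0 6 (by norm_num) (by norm_num)]
      _ = uu A B 2 * (uu A B 3 * (uu A B 4 * ((uu A B 5 * uu A B 0) * uu A B 6))) := by group
      _ = uu A B 2 * (uu A B 3 * (uu A B 4 * ((uu A B 0 * uu A B 5) * uu A B 6))) := by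
          rw [c0 5 (by norm_num) (by norm_num)]
      _ = uu A B 2 * (uu A B 3 * ((uu A B 4 * uu A B 0) * (uu A B 5 * uu A B 6))) := by group
      _ = uu A B 2 * (uu A B 3 * ((uu A B 0 * uu A B 4) * (uu A B 5 * uu A B 6))) := by
          rw [c0 4 (by norm_num) (by norm_num)]
      _ = uu A B 2 * ((uu A B 3 * uu A B 0) * (uu A B 4 * (uu A B 5 * uu A B 6))) := by group
      _ = uu A B 2 * ((uu A B 0 * uu A B 3) * (uu A B 4 * (uu A B 5 * uu A B 6))) := by
          rw [c0 3 (by norm_num) (by norm_num)]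
      _ = (uu A B 2 * uu A B 0) * (uu A B 3 * (uu A B 4 * (uu A B 5 * uu A B 6))) := by group
      _ = (uu A B 0 * uu A B 2) * (uu A B 3 * (uu A B 4 * (uu A B 5 * uu A B 6))) := by
          rw [c0 2 (by norm_num) (by norm_num)]
      _ = uu A B 0 * (uu A B 2 * (uu A B 3 * (uu A B 4 * (uu A B 5 * uu A B 6)))) := by group
  have e1 : uu A B 1 * B = B * uu A B 0 := by unfold uu; group
  have sp := uu_sigma_prod A B h2
  have step : uu A B 1 * uu A B 0 * uu A B 1 * (uu A B 2 * (uu A B 3 * (uu A B 4 * (uu A B 5 * uu A B 6))))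
      = uu A B 0 * uu A B 1 * uu A B 0 * (uu A B 2 * (uu A B 3 * (uu A B 4 * (uu A B 5 * uu A B 6)))) := by
    calc uu A B 1 * uu A B 0 * uu A B 1 * (uu A B 2 * (uu A B 3 * (uu A B 4 * (uu A B 5 * uu A B 6))))
        = uu A B 1 * (uu A B 0 * uu A B 1 * (uu A B 2 * (uu A B 3 * (uu A B 4 * (uu A B 5 * uu A B 6))))) := by
          group
      _ = uu A B 1 * B := by rw [← sp]
      _ = B * uu A B 0 := e1
      _ = uu A B 0 * uu A B 1 * (uu A B 2 * (uu A B 3 * (uu A B 4 * (uu A B 5 * uu A B 6)))) * uu A B 0 := by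
          rw [← sp]
      _ = uu A B 0 * uu A B 1 * ((uu A B 2 * (uu A B 3 * (uu A B 4 * (uu A B 5 * uu A B 6)))) * uu A B 0) := by
          group
      _ = uu A B 0 * uu A B 1 * (uu A B 0 * (uu A B 2 * (uu A B 3 * (uu A B 4 * (uu A B 5 * uu A B 6))))) := by
          rw [hw]
      _ = uu A B 0 * uu A B 1 * uu A B 0 * (uu A B 2 * (uu A B 3 * (uu A B 4 * (uu A B 5 * uu A B 6)))) := by
          group
  exact (mul_right_cancel step).symm

include hA h1 h2 in
lemma uu_braid (n : ℤ) :
    uu A B n * uu A B (n+1) * uu A B n = uu A B (n+1) * uu A B n * uu A B (n+1) := by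
  have e1 : uu A B n * uu A B (n+1) * uu A B n
      = B^n * (uu A B 0 * uu A B 1 * uu A B 0) * B^(-n) := by unfold uu; group
  have e2 : uu A B (n+1) * uu A B n * uu A B (n+1)
      = B^n * (uu A B 1 * uu A B 0 * uu A B 1) * B^(-n) := by unfold uu; group
  rw [e1, e2, uu_braid01 A B hA h1 h2]

end Three


lemma mk_rel_eq_one {α : Type*} {rels : Set (FreeGroup α)} {r : FreeGroup α} (h : r ∈ rels) :
    PresentedGroup.mk rels r = 1 :=
  (QuotientGroup.eq_one_iff r).2 (Subgroup.subset_normalClosure h)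

lemma mk_of {α : Type*} {rels : Set (FreeGroup α)} (x : α) :
    PresentedGroup.mk rels (FreeGroup.of x) = PresentedGroup.of x := rfl

abbrev W := PresentedGroup {r | IsCoxE8Rel r}
abbrev Q3 := PresentedGroup {r | IsCoxE8ThreeRel r}

/-- The chain generators of `W`, as a function on `ℕ`. -/
noncomputable def aW : ℕ → W := fun n => if h : n < 7 then PresentedGroup.of (Sum.inl ⟨n, h⟩) else 1

noncomputable def tW : W := PresentedGroup.of (Sum.inr ())
noncomputable def AQ : Q3 := PresentedGroup.of 0
noncomputable def BQ : Q3 := PresentedGroup.of 1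
noncomputable def CQ : Q3 := PresentedGroup.of 2

lemma aW_eq (n : ℕ) (h : n < 7) : aW n = PresentedGroup.of (Sum.inl ⟨n, h⟩) := dif_pos h

lemma aW_num0 : aW 0 = PresentedGroup.of (Sum.inl (0 : Fin 7)) := aW_eq 0 (by norm_num)
lemma aW_num1 : aW 1 = PresentedGroup.of (Sum.inl (1 : Fin 7)) := aW_eq 1 (by norm_num)
lemma aW_num2 : aW 2 = PresentedGroup.of (Sum.inl (2 : Fin 7)) := aW_eq 2 (by norm_num)
lemma aW_num3 : aW 3 = PresentedGroup.of (Sum.inl (3 : Fin 7)) := aW_eq 3 (by norm_num)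
lemma aW_num4 : aW 4 = PresentedGroup.of (Sum.inl (4 : Fin 7)) := aW_eq 4 (by norm_num)
lemma aW_num5 : aW 5 = PresentedGroup.of (Sum.inl (5 : Fin 7)) := aW_eq 5 (by norm_num)
lemma aW_num6 : aW 6 = PresentedGroup.of (Sum.inl (6 : Fin 7)) := aW_eq 6 (by norm_num)

lemma W_rel {r : FreeGroup (Fin 7 ⊕ Unit)} (h : IsCoxE8Rel r) :
    PresentedGroup.mk {r | IsCoxE8Rel r} r = 1 := mk_rel_eq_one h

lemma Q_rel {r : FreeGroup (Fin 3)} (h : IsCoxE8ThreeRel r) :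
    PresentedGroup.mk {r | IsCoxE8ThreeRel r} r = 1 := mk_rel_eq_one h

lemma W_of_sq (x : Fin 7 ⊕ Unit) (h : IsCoxE8Rel ((FreeGroup.of x) ^ 2)) :
    (PresentedGroup.of x : W) * PresentedGroup.of x = 1 := by
  have := W_rel h
  rw [map_pow, mk_of, pow_two] at this
  exact this

lemma haW_sq : ∀ n, n < 7 → aW n * aW n = 1 := by
  intro n h
  rw [aW_eq n h]
  exact W_of_sq _ (IsCoxE8Rel.sq ⟨n, h⟩)

lemma W_t_sq : tW * tW = 1 := W_of_sq _ IsCoxE8Rel.t_sq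

lemma haW_comm : ∀ i j, i + 2 ≤ j → j < 7 → aW i * aW j = aW j * aW i := by
  intro i j hij hj
  have hi : i < 7 := by omega
  rw [aW_eq i hi, aW_eq j hj]
  have hrel := W_rel (IsCoxE8Rel.comm_ss ⟨i, hi⟩ ⟨j, hj⟩ (by simpa using by omega))
  rw [map_pow, map_mul, mk_of, mk_of, pow_two] at hrel
  exact comm_of_sq (W_of_sq _ (IsCoxE8Rel.sq ⟨i, hi⟩)) (W_of_sq _ (IsCoxE8Rel.sq ⟨j, hj⟩)) hrel

lemma haW_braid : ∀ i, i + 1 < 7 →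
    aW i * aW (i+1) * aW i = aW (i+1) * aW i * aW (i+1) := by
  intro i h
  rw [aW_eq i (by omega), aW_eq (i+1) h]
  have hrel := W_rel (IsCoxE8Rel.braid_s i h)
  rw [map_pow, map_mul, mk_of, mk_of] at hrel
  exact braid_of_cube (W_of_sq _ (IsCoxE8Rel.sq ⟨i, by omega⟩))
    (W_of_sq _ (IsCoxE8Rel.sq ⟨i+1, h⟩)) hrel

lemma hT_comm : ∀ n, n < 7 → n ≠ 2 → tW * aW n = aW n * tW := by
  intro n h hn
  rw [aW_eq n h]
  have hrel := W_rel (IsCoxE8Rel.comm_t ⟨n, h⟩ hn)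
  rw [map_pow, map_mul, mk_of, mk_of, pow_two] at hrel
  exact comm_of_sq W_t_sq (W_of_sq _ (IsCoxE8Rel.sq ⟨n, h⟩)) hrel

lemma hT_braid : tW * aW 2 * tW = aW 2 * tW * aW 2 := by
  rw [aW_eq 2 (by norm_num)]
  have hrel := W_rel IsCoxE8Rel.braid_t
  rw [map_pow, map_mul, mk_of, mk_of] at hrel
  exact braid_of_cube W_t_sq (W_of_sq _ (IsCoxE8Rel.sq 2)) hrel

/-- The image of `σ` in `W`. -/
noncomputable def sW : W := cp aW 6

lemma W_sigma_pow : sW ^ 8 = 1 :=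
  cp_pow_one aW haW_sq haW_comm haW_braid 6 (by norm_num)

lemma W_sa_pow : (sW * aW 0) ^ 7 = 1 :=
  cp_mul_a_pow aW haW_sq haW_comm haW_braid 6 0 (by norm_num) rfl

lemma W_conj (i : ℕ) (h : i ≤ 6) : sW ^ i * aW 0 * (sW ^ i)⁻¹ = aW i :=
  cp_conj_pow aW haW_comm haW_braid i h

-- relations in Q3
lemma hQ_A : AQ * AQ = 1 := by
  have := Q_rel IsCoxE8ThreeRel.r₅
  rw [map_pow, mk_of, pow_two] at this
  exact this

lemma hQ_C : CQ * CQ = 1 := by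
  have := Q_rel IsCoxE8ThreeRel.r₆
  rw [map_pow, mk_of, pow_two] at this
  exact this

lemma hQ1 : ∀ i : ℕ, i = 2 ∨ i = 3 ∨ i = 4 →
    AQ * (BQ^i * AQ * (BQ^i)⁻¹) = (BQ^i * AQ * (BQ^i)⁻¹) * AQ := by
  intro i hi
  have := Q_rel (IsCoxE8ThreeRel.r₁ i hi)
  simp only [map_mul, map_inv, map_pow, mk_of] at this
  rw [mul_inv_eq_one] at this
  rw [show AQ * (BQ^i * AQ * (BQ^i)⁻¹) = AQ * BQ^i * AQ * (BQ^i)⁻¹ by group]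
  exact this

lemma hQ2 : BQ^(8:ℕ) = (BQ * AQ)^(7:ℕ) := by
  have := Q_rel IsCoxE8ThreeRel.r₂
  simp only [map_mul, map_inv, map_pow, mk_of] at this
  rw [mul_inv_eq_one] at this
  exact this

lemma hQ3 : ∀ i : ℕ, i = 0 ∨ i = 1 ∨ i = 3 ∨ i = 4 ∨ i = 5 ∨ i = 6 →
    CQ * (BQ^i * AQ * (BQ^i)⁻¹) = (BQ^i * AQ * (BQ^i)⁻¹) * CQ := by
  intro i hi
  have := Q_rel (IsCoxE8ThreeRel.r₃ i hi)
  simp only [map_mul, map_inv, map_pow, mk_of] at this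
  rw [mul_inv_eq_one] at this
  exact this

lemma hQ4 : CQ * (BQ^(2:ℕ) * AQ * (BQ^(2:ℕ))⁻¹) * CQ
    = (BQ^(2:ℕ) * AQ * (BQ^(2:ℕ))⁻¹) * CQ * (BQ^(2:ℕ) * AQ * (BQ^(2:ℕ))⁻¹) := by
  have := Q_rel IsCoxE8ThreeRel.r₄
  simp only [map_mul, map_inv, map_pow, mk_of] at this
  rw [mul_inv_eq_one] at this
  exact this


-- specialized u-lemmas in Q3
lemma uQ_sq (n : ℤ) : uu AQ BQ n * uu AQ BQ n = 1 := uu_sq AQ BQ hQ_A n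

lemma uQ_comm (n d : ℤ) (hd2 : 2 ≤ d) (hd6 : d ≤ 6) :
    uu AQ BQ n * uu AQ BQ (n + d) = uu AQ BQ (n + d) * uu AQ BQ n :=
  uu_comm AQ BQ hQ_A hQ1 hQ2 n d hd2 hd6

lemma uQ_braid (n : ℤ) : uu AQ BQ n * uu AQ BQ (n+1) * uu AQ BQ n
    = uu AQ BQ (n+1) * uu AQ BQ n * uu AQ BQ (n+1) :=
  uu_braid AQ BQ hQ_A hQ1 hQ2 n

lemma uQ_sigma : BQ = uu AQ BQ 0 * uu AQ BQ 1 *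
    (uu AQ BQ 2 * (uu AQ BQ 3 * (uu AQ BQ 4 * (uu AQ BQ 5 * uu AQ BQ 6)))) :=
  uu_sigma_prod AQ BQ hQ2

lemma hCu : ∀ n : ℕ, n < 7 → n ≠ 2 → CQ * uu AQ BQ n = uu AQ BQ n * CQ := by
  intro n h hn
  rw [uu_natCast]
  interval_cases n
  · exact hQ3 0 (by omega)
  · exact hQ3 1 (by omega)
  · exact absurd rfl hn
  · exact hQ3 3 (by omega)
  · exact hQ3 4 (by omega)
  · exact hQ3 5 (by omega)
  · exact hQ3 6 (by omega)

lemma hCu_braid : CQ * uu AQ BQ 2 * CQ = uu AQ BQ 2 * CQ * uu AQ BQ 2 := by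
  rw [show (2:ℤ) = ((2:ℕ):ℤ) by norm_num, uu_natCast]
  exact hQ4

/-- The generator map for `fhom : Q3 →* W`. -/
noncomputable def f3 : Fin 3 → W := fun x => if x = 0 then aW 0 else if x = 1 then sW else tW

lemma f3_0 : f3 0 = aW 0 := rfl
lemma f3_1 : f3 1 = sW := rfl
lemma f3_2 : f3 2 = tW := rfl

/-- The generator map for `ghom : W →* Q3`. -/
noncomputable def g7 : (Fin 7 ⊕ Unit) → Q3 :=
  Sum.elim (fun i => uu AQ BQ ((i : ℕ) : ℤ)) (fun _ => CQ)

lemma hfrels : ∀ r ∈ {r | IsCoxE8ThreeRel r}, FreeGroup.lift f3 r = 1 := by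
  intro r hr
  induction hr with
  | r₁ i h =>
    simp only [map_mul, map_pow, map_inv, FreeGroup.lift_apply_of, f3_0, f3_1]
    rw [mul_inv_eq_one]
    have key := W_conj i (by omega)
    rw [key, ← haW_comm 0 i (by omega) (by omega), ← key]
    group
  | r₂ =>
    simp only [map_mul, map_pow, map_inv, FreeGroup.lift_apply_of, f3_0, f3_1]
    rw [mul_inv_eq_one, W_sa_pow]
    exact W_sigma_pow
  | r₃ i h =>
    simp only [map_mul, map_pow, map_inv, FreeGroup.lift_apply_of, f3_0, f3_1, f3_2]
    rw [mul_inv_eq_one, W_conj i (by omega)]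
    exact hT_comm i (by omega) (by omega)
  | r₄ =>
    simp only [map_mul, map_pow, map_inv, FreeGroup.lift_apply_of, f3_0, f3_1, f3_2]
    rw [mul_inv_eq_one, W_conj 2 (by norm_num)]
    exact hT_braid
  | r₅ =>
    simp only [map_pow, FreeGroup.lift_apply_of, f3_0]
    rw [pow_two]
    exact haW_sq 0 (by norm_num)
  | r₆ =>
    simp only [map_pow, FreeGroup.lift_apply_of, f3_2]
    rw [pow_two]
    exact W_t_sq

lemma hgrels : ∀ r ∈ {r | IsCoxE8Rel r}, FreeGroup.lift g7 r = 1 := by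
  intro r hr
  induction hr with
  | sq i =>
    simp only [map_pow, FreeGroup.lift_apply_of, g7, Sum.elim_inl]
    rw [pow_two]
    exact uQ_sq _
  | t_sq =>
    simp only [map_pow, FreeGroup.lift_apply_of, g7, Sum.elim_inr]
    rw [pow_two]
    exact hQ_C
  | comm_ss i j h =>
    simp only [map_pow, map_mul, FreeGroup.lift_apply_of, g7, Sum.elim_inl]
    have hj7 : (j : ℕ) < 7 := j.isLt
    have hc := uQ_comm ((i:ℕ) : ℤ) (((j:ℕ) : ℤ) - ((i:ℕ) : ℤ)) (by omega) (by omega)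
    rw [show ((i:ℕ) : ℤ) + (((j:ℕ) : ℤ) - ((i:ℕ) : ℤ)) = ((j:ℕ) : ℤ) by ring] at hc
    exact sq_one_of_comm (uQ_sq _) (uQ_sq _) hc
  | braid_s i h =>
    simp only [map_pow, map_mul, FreeGroup.lift_apply_of, g7, Sum.elim_inl]
    have hb := uQ_braid (i : ℤ)
    rw [show ((i:ℤ) + 1) = (((i+1:ℕ)) : ℤ) by push_cast; ring] at hb
    exact cube_one_of_braid (uQ_sq _) (uQ_sq _) hb
  | comm_t i h =>
    simp only [map_pow, map_mul, FreeGroup.lift_apply_of, g7, Sum.elim_inl, Sum.elim_inr]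
    exact sq_one_of_comm hQ_C (uQ_sq _) (hCu (i:ℕ) i.isLt h)
  | braid_t =>
    simp only [map_pow, map_mul, FreeGroup.lift_apply_of, g7, Sum.elim_inl, Sum.elim_inr]
    exact cube_one_of_braid hQ_C (uQ_sq _) hCu_braid

noncomputable def fhom : Q3 →* W := PresentedGroup.toGroup hfrels
noncomputable def ghom : W →* Q3 := PresentedGroup.toGroup hgrels

lemma fhom_of (x : Fin 3) : fhom (PresentedGroup.of x) = f3 x := PresentedGroup.toGroup.of _
lemma ghom_of (x : Fin 7 ⊕ Unit) : ghom (PresentedGroup.of x) = g7 x := PresentedGroup.toGroup.of _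

lemma ghom_aW (k : ℕ) (h : k < 7) : ghom (aW k) = uu AQ BQ (k : ℤ) := by
  rw [aW_eq k h, ghom_of]
  rfl

lemma cp6_expand : cp aW 6 = aW 0 * aW 1 * aW 2 * aW 3 * aW 4 * aW 5 * aW 6 := by
  rw [show (6:ℕ) = 5+1 from rfl, cp_succ, show (5:ℕ) = 4+1 from rfl, cp_succ,
    show (4:ℕ) = 3+1 from rfl, cp_succ, show (3:ℕ) = 2+1 from rfl, cp_succ,
    show (2:ℕ) = 1+1 from rfl, cp_succ, show (1:ℕ) = 0+1 from rfl, cp_succ, cp_zero]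

lemma ghom_sW : ghom sW = BQ := by
  rw [sW, cp6_expand]
  simp only [map_mul]
  rw [ghom_aW 0 (by norm_num), ghom_aW 1 (by norm_num), ghom_aW 2 (by norm_num),
    ghom_aW 3 (by norm_num), ghom_aW 4 (by norm_num), ghom_aW 5 (by norm_num),
    ghom_aW 6 (by norm_num)]
  conv_rhs => rw [uQ_sigma]
  push_cast
  group

lemma hgf : ghom.comp fhom = MonoidHom.id Q3 := by
  apply PresentedGroup.ext
  intro x
  rw [MonoidHom.comp_apply, MonoidHom.id_apply, fhom_of]
  fin_cases x
  · show ghom (f3 0) = (PresentedGroup.of 0 : Q3)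
    rw [f3_0, ghom_aW 0 (by norm_num)]
    rw [show ((0:ℕ):ℤ) = (0:ℤ) by norm_num, uu_zero]
    rfl
  · show ghom (f3 1) = (PresentedGroup.of 1 : Q3)
    rw [f3_1, ghom_sW]
    rfl
  · show ghom (f3 2) = (PresentedGroup.of 2 : Q3)
    rw [f3_2]
    rw [show tW = PresentedGroup.of (Sum.inr ()) from rfl, ghom_of]
    rfl

lemma fhom_uu (k : ℕ) : fhom (uu AQ BQ (k : ℤ)) = sW ^ k * aW 0 * (sW ^ k)⁻¹ := by
  rw [uu]
  simp only [map_mul, map_zpow]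
  rw [show fhom BQ = sW from fhom_of 1, show fhom AQ = aW 0 from fhom_of 0,
    zpow_neg, zpow_natCast]

lemma hfg : fhom.comp ghom = MonoidHom.id W := by
  apply PresentedGroup.ext
  intro x
  rw [MonoidHom.comp_apply, MonoidHom.id_apply, ghom_of]
  rcases x with i | u
  · show fhom (uu AQ BQ ((i:ℕ) : ℤ)) = _
    rw [fhom_uu, W_conj (i:ℕ) (by omega), aW_eq _ i.isLt]
  · show fhom CQ = _
    rw [show CQ = PresentedGroup.of 2 from rfl, fhom_of, f3_2]
    rfl

/-- The Coxeter group of type `E₈` admits the three-generator presentation with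
generators `σ₁, σ, ω`, the isomorphism sending `σ₁ ↦ s₁`, `σ ↦ s₁s₂⋯s₇`, `ω ↦ t`. -/
theorem three_generator_presentation_of_coxeter_E8 :
    ∃ e : PresentedGroup {r | IsCoxE8ThreeRel r} ≃* PresentedGroup {r | IsCoxE8Rel r},
      e (.of 0) = PresentedGroup.of (Sum.inl 0) ∧
      e (.of 2) = PresentedGroup.of (Sum.inr ()) ∧
      e (.of 1) = (List.ofFn (fun i : Fin 7 =>
        (PresentedGroup.of (Sum.inl i) : PresentedGroup {r | IsCoxE8Rel r}))).prod := by
  refine ⟨MonoidHom.toMulEquiv fhom ghom hgf hfg, ?_, ?_, ?_⟩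
  · show fhom (.of 0) = _
    rw [fhom_of, f3_0, aW_num0]
  · show fhom (.of 2) = _
    rw [fhom_of, f3_2]
    rfl
  · show fhom (.of 1) = _
    rw [fhom_of, f3_1]
    have hlist : (List.ofFn (fun i : Fin 7 =>
        (PresentedGroup.of (Sum.inl i) : W))).prod
        = PresentedGroup.of (Sum.inl 0) * (PresentedGroup.of (Sum.inl 1) *
          (PresentedGroup.of (Sum.inl 2) * (PresentedGroup.of (Sum.inl 3) *
          (PresentedGroup.of (Sum.inl 4) * (PresentedGroup.of (Sum.inl 5) *
          PresentedGroup.of (Sum.inl 6)))))) := by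
      rw [show (List.ofFn (fun i : Fin 7 => (PresentedGroup.of (Sum.inl i) : W)))
          = [PresentedGroup.of (Sum.inl 0), PresentedGroup.of (Sum.inl 1),
             PresentedGroup.of (Sum.inl 2), PresentedGroup.of (Sum.inl 3),
             PresentedGroup.of (Sum.inl 4), PresentedGroup.of (Sum.inl 5),
             PresentedGroup.of (Sum.inl 6)] by simp [List.ofFn_succ]]
      simp [List.prod_cons]
    rw [hlist, sW, cp6_expand, aW_num0, aW_num1, aW_num2, aW_num3, aW_num4, aW_num5, aW_num6]
    group

end CoxeterE8
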